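/- Let n = 1 and consider f(x) = f₀ + b·x^{2d} + c·x^k with f₀, b > 0, d ≥ 1, k odd, 0 < k < 2d, and c ∈ ℝ. Set λ_0 = 1 − k/(2d), λ_1 = k/(2d), and Θ = (f₀/λ_0)^{λ_0}·(b/λ_1)^{λ_1}. Then f(x) ≥ 0 for all x ∈ ℝ if and only if |c| ≤ Θ. -/

import Mathlib

open Real

theorem stmt_14 (f0 b c : ℝ) (d k : ℕ)
    (hf0 : 0 < f0) (hb : 0 < b) (hd : 1 ≤ d) (hkodd : Odd k)
    (hk : 0 < k) (hk2d : k < 2 * d) :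
    (∀ x : ℝ, 0 ≤ f0 + b * x ^ (2 * d) + c * x ^ k) ↔
      |c| ≤ (f0 / (1 - (k : ℝ) / (2 * d))) ^ (1 - (k : ℝ) / (2 * d)) *
        (b / ((k : ℝ) / (2 * d))) ^ ((k : ℝ) / (2 * d)) := by
  set l : ℝ := (k : ℝ) / (2 * d) with hldef
  have h2d : (0:ℝ) < 2 * (d:ℕ) := by
    have : (1:ℝ) ≤ (d:ℝ) := by exact_mod_cast hd
    linarith
  have hl0 : 0 < l := by
    apply div_pos (by exact_mod_cast hk) h2d
  have hl1 : l < 1 := by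
    rw [hldef, div_lt_one h2d]
    exact_mod_cast hk2d
  have hll : (2 * (d:ℝ)) * l = (k:ℝ) := by
    rw [hldef]; field_simp [h2d.ne']
  have hl1' : (0:ℝ) < 1 - l := by linarith
  clear_value l
  set Θ : ℝ := (f0 / (1 - l)) ^ (1 - l) * (b / l) ^ l with hTdef
  -- key AM-GM inequality
  have key : ∀ t : ℝ, 0 ≤ t → Θ * t ^ k ≤ f0 + b * t ^ (2 * d) := by
    intro t ht
    have htk : (t ^ (2 * d) : ℝ) ^ l = t ^ k := by
      rw [← Real.rpow_natCast t (2 * d), ← Real.rpow_mul ht]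
      rw [show ((2 * d : ℕ) : ℝ) * l = (k:ℝ) by push_cast; linarith [hll]]
      rw [Real.rpow_natCast]
    have hamgm := Real.geom_mean_le_arith_mean2_weighted
      (w₁ := 1 - l) (w₂ := l) (p₁ := f0 / (1 - l)) (p₂ := b * t ^ (2 * d) / l)
      (by linarith) (le_of_lt hl0)
      (div_nonneg hf0.le hl1'.le) (div_nonneg (by positivity) hl0.le) (by ring)
    have hsplit : (b * t ^ (2 * d) / l) ^ l = (b / l) ^ l * (t ^ (2 * d)) ^ l := by
      rw [show b * t ^ (2 * d) / l = (b / l) * t ^ (2 * d) by ring,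
        Real.mul_rpow (div_nonneg hb.le hl0.le) (by positivity)]
    have e1 : (1 - l) * (f0 / (1 - l)) = f0 := by field_simp
    have e2 : l * (b * t ^ (2 * d) / l) = b * t ^ (2 * d) := by field_simp
    calc Θ * t ^ k = (f0 / (1 - l)) ^ (1 - l) * ((b / l) ^ l * (t ^ (2 * d)) ^ l) := by
          rw [htk]; ring
      _ = (f0 / (1 - l)) ^ (1 - l) * (b * t ^ (2 * d) / l) ^ l := by rw [hsplit]
      _ ≤ (1 - l) * (f0 / (1 - l)) + l * (b * t ^ (2 * d) / l) := hamgm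
      _ = f0 + b * t ^ (2 * d) := by rw [e1, e2]
  -- the optimal point
  set r : ℝ := l * f0 / ((1 - l) * b) with hrdef
  have hr : 0 < r := by
    apply div_pos (mul_pos hl0 hf0)
    exact mul_pos hl1' hb
  set t0 : ℝ := r ^ ((1 : ℝ) / (2 * d)) with ht0def
  have ht0 : 0 < t0 := Real.rpow_pos_of_pos hr _
  have ht02d : t0 ^ (2 * d) = r := by
    rw [ht0def, ← Real.rpow_natCast (r ^ ((1:ℝ)/(2*d))) (2 * d),
      ← Real.rpow_mul (le_of_lt hr)]
    rw [show (1:ℝ)/(2*d) * ((2*d : ℕ):ℝ) = 1 by push_cast; field_simp]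
    exact Real.rpow_one r
  have ht0k : t0 ^ k = r ^ l := by
    rw [← ht02d, ← Real.rpow_natCast t0 (2 * d), ← Real.rpow_mul (le_of_lt ht0),
      ← Real.rpow_natCast t0 k]
    congr 1
    rw [← hll]; push_cast; ring
  have heq : Θ * t0 ^ k = f0 + b * t0 ^ (2 * d) := by
    have hA : (0:ℝ) < f0 / (1 - l) := div_pos hf0 hl1'
    have h1 : (b / l) ^ l * r ^ l = (f0 / (1 - l)) ^ l := by
      rw [← Real.mul_rpow (div_nonneg hb.le hl0.le) (le_of_lt hr)]
      congr 1
      rw [hrdef]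
      field_simp
    have h2 : (f0 / (1 - l)) ^ (1 - l) * (f0 / (1 - l)) ^ l = f0 / (1 - l) := by
      rw [← Real.rpow_add hA]; norm_num
    have h3 : f0 + b * r = f0 / (1 - l) := by
      rw [hrdef]; field_simp; ring
    rw [ht0k, ht02d, hTdef, mul_assoc, h1, h2, h3]
  constructor
  · intro h
    have habs : ∀ t : ℝ, 0 ≤ t → |c| * t ^ k ≤ f0 + b * t ^ (2 * d) := by
      intro t ht
      rcases le_or_gt 0 c with hc | hc
      · have := h (-t)
        rw [Odd.neg_pow hkodd, Even.neg_pow (by exact even_two_mul d) t] at this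
        rw [abs_of_nonneg hc]
        nlinarith
      · have := h t
        rw [abs_of_neg hc]
        nlinarith
    have h1 := habs t0 (le_of_lt ht0)
    rw [← heq] at h1
    have htk : 0 < t0 ^ k := pow_pos ht0 k
    exact le_of_mul_le_mul_right h1 htk
  · intro hc x
    have h1 : |c * x ^ k| ≤ Θ * |x| ^ k := by
      rw [abs_mul, abs_pow]
      exact mul_le_mul_of_nonneg_right hc (by positivity)
    have h2 : Θ * |x| ^ k ≤ f0 + b * |x| ^ (2 * d) := key |x| (abs_nonneg x)
    have h3 : |x| ^ (2 * d) = x ^ (2 * d) := by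
      rw [← abs_pow, abs_of_nonneg (Even.pow_nonneg (even_two_mul d) x)]
    rw [h3] at h2
    have := neg_abs_le (c * x ^ k)
    linarith [h1, h2, this]
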